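/- arXiv:1504.03579 — 2 statements merged into one kernel-verified Lean document; each statement's English description precedes it below -/
import Mathlib

section
/- Fix positive integers $a$ and $t$ and let $A$ be the poset of weakly increasing $a$-tuples with entries in $\{1,\dots,t\}$ ordered by $\underline{i} \preccurlyeq \underline{j} \iff \forall s,\, i_s \ge j_s$. For $a = 2$, the maximal size of an antichain in $A$ equals $\lfloor (t+1)/2 \rfloor$. -/
/-- for `a = 2`, the maximal size of an antichain in the poset of weakly
increasing pairs with entries in `{1,…,t}`, ordered by `i ≼ j ↔ ∀ s, i s ≥ j s`,
is `⌊(t+1)/2⌋`. -/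
theorem stmt_12 (t : ℕ) (ht : 0 < t) :
    IsGreatest {n : ℕ | ∃ B : Finset {g : Fin 2 → Fin t // Monotone g},
        IsAntichain (fun i j => ∀ s, j.1 s ≤ i.1 s)
          (B : Set {g : Fin 2 → Fin t // Monotone g}) ∧ B.card = n}
      ((t + 1) / 2) := by
  have h2 : (0:ℕ) < 2 := by norm_num
  constructor
  · -- membership: construct the antidiagonal antichain
    have hle : ∀ i : ℕ, i < (t+1)/2 → 2*i ≤ t - 1 := by
      intro i hi
      have : (i+1) * 2 ≤ t + 1 := (Nat.le_div_iff_mul_le h2).mp hi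
      omega
    let f : Fin ((t+1)/2) → {g : Fin 2 → Fin t // Monotone g} := fun i =>
      ⟨fun s => if s.val = 0 then ⟨i, by have := hle i i.2; omega⟩
        else ⟨t-1-i, by omega⟩,
       by
        intro a b hab
        have h := hle i i.2
        fin_cases a <;> fin_cases b <;>
          simp_all [Fin.le_def] <;> omega⟩
    refine ⟨Finset.univ.image f, ?_, ?_⟩
    · intro x hx y hy hxy hr
      simp only [Finset.coe_image, Set.mem_image] at hx hy
      obtain ⟨i, -, rfl⟩ := hx
      obtain ⟨j, -, rfl⟩ := hy
      have h0 := hr 0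
      have h1 := hr 1
      have hi := hle i i.2
      have hj := hle j j.2
      simp only [f, Fin.le_def] at h0 h1
      norm_num at h0 h1
      have : (i : ℕ) = j := by omega
      exact hxy (by congr 1; exact Fin.ext this)
    · rw [Finset.card_image_of_injective _ ?_, Finset.card_univ, Fintype.card_fin]
      intro i j hij
      have : ((f i).1 0 : ℕ) = ((f j).1 0 : ℕ) := by rw [hij]
      simp only [f] at this
      norm_num at this
      exact Fin.ext this
  · -- upper bound
    rintro n ⟨B, hA, rfl⟩
    rcases B.eq_empty_or_nonempty with rfl | hB
    · simp
    rw [Nat.le_div_iff_mul_le h2]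
    -- key: first (resp. second) coordinates determine elements of B
    have key : ∀ x ∈ B, ∀ y ∈ B, (x.1 0 = y.1 0 ∨ x.1 1 = y.1 1) → x = y := by
      intro x hx y hy h
      by_contra hne
      have hxy := hA hx hy hne
      have hyx := hA hy hx (Ne.symm hne)
      rcases h with h | h
      · rcases le_total (x.1 1) (y.1 1) with hc | hc
        · exact hyx (fun s => by fin_cases s <;> simp [h, hc] <;> exact le_of_eq h.symm)
        · exact hxy (fun s => by fin_cases s <;> simp [h, hc] <;> exact le_of_eq h)
      · rcases le_total (x.1 0) (y.1 0) with hc | hc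
        · exact hyx (fun s => by fin_cases s <;> simp [h, hc] <;> exact le_of_eq h.symm)
        · exact hxy (fun s => by fin_cases s <;> simp [h, hc] <;> exact le_of_eq h)
    set S : Finset ℕ := B.image (fun x => ((x.1 0 : Fin t) : ℕ)) with hS
    have hScard : S.card = B.card := by
      apply Finset.card_image_of_injOn
      intro x hx y hy hxy
      exact key x hx y hy (Or.inl (Fin.ext hxy))
    have hSne : S.Nonempty := hB.image _
    set M := S.max' hSne with hM
    obtain ⟨x, hxB, hx0⟩ : ∃ x ∈ B, ((x.1 0 : Fin t) : ℕ) = M :=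
      Finset.mem_image.mp (S.max'_mem hSne)
    -- x has minimal second coordinate
    have hmin : ∀ y ∈ B, (x.1 1 : ℕ) ≤ (y.1 1 : ℕ) := by
      intro y hy
      by_cases hxy : x = y
      · rw [hxy]
      · have hy0le : ((y.1 0 : Fin t) : ℕ) ≤ M := S.le_max' _ (Finset.mem_image_of_mem _ hy)
        have hy0ne : ((y.1 0 : Fin t) : ℕ) ≠ M := by
          intro h
          exact hxy (key x hxB y hy (Or.inl (Fin.ext (by omega))))
        by_contra hc
        push_neg at hc
        refine hA hxB hy hxy (fun s => ?_)
        match s with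
        | 0 => exact Fin.le_def.mpr (by omega)
        | 1 => exact Fin.le_def.mpr (by omega)
    -- card bounds
    have hMlb : B.card ≤ M + 1 := by
      rw [← hScard]
      have : S ⊆ Finset.range (M+1) := by
        intro a ha
        simp only [Finset.mem_range]
        have := S.le_max' a ha
        omega
      calc S.card ≤ (Finset.range (M+1)).card := Finset.card_le_card this
        _ = M + 1 := Finset.card_range _
    set S' : Finset ℕ := B.image (fun x => ((x.1 1 : Fin t) : ℕ)) with hS'
    have hS'card : S'.card = B.card := by
      apply Finset.card_image_of_injOn
      intro a ha b hb hab
      exact key a ha b hb (Or.inr (Fin.ext hab))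
    have hub : B.card ≤ t - (x.1 1 : ℕ) := by
      rw [← hS'card]
      have hsub : S' ⊆ Finset.Icc ((x.1 1 : ℕ)) (t-1) := by
        intro a ha
        rw [hS'] at ha
        simp only [Finset.mem_image] at ha
        obtain ⟨y, hy, rfl⟩ := ha
        simp only [Finset.mem_Icc]
        refine ⟨hmin y hy, ?_⟩
        have := (y.1 1).2
        omega
      calc S'.card ≤ (Finset.Icc ((x.1 1 : ℕ)) (t-1)).card := Finset.card_le_card hsub
        _ = t - 1 + 1 - (x.1 1 : ℕ) := Nat.card_Icc _ _
        _ ≤ t - (x.1 1 : ℕ) := by have := (x.1 1).2; omega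
    have hmono : ((x.1 0 : Fin t) : ℕ) ≤ ((x.1 1 : Fin t) : ℕ) := x.2 (by norm_num : (0:Fin 2) ≤ 1)
    have hx1 : (x.1 1 : ℕ) ≤ t := by have := (x.1 1).2; omega
    omega
end

section
/- Let $s \ge 2$ and let $f : \mathbb{R}^s \to \mathbb{R}$ be given by $f(\beta) = \langle c, \beta \rangle + \max_{k=1,\dots,p} \langle v_k, \beta \rangle$ where $c \in \mathbb{R}^s$ and $v_1,\dots,v_p \in \mathbb{R}^s$ with $p \le s - 1$. If there exists $\alpha \in \mathbb{R}^s$ with $\alpha_i > 0$ for all $i$ and $f(\alpha) \le 0$, then there exists $\beta \in \mathbb{R}^s$ with $\beta_i \ge 0$ for all $i$, $\beta_j = 0$ for some $j$, $\beta \ne 0$, and $f(\beta) \le 0$. -/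
open Finset

/-- Move from a strictly positive point `α` along a direction `d` having a negative
coordinate until hitting the boundary of the positive orthant. -/
lemma construct_aux {s : ℕ} (α d : Fin s → ℝ) (hα : ∀ i, 0 < α i)
    (hneg : ∃ i, d i < 0) (hnp : ∀ μ : ℝ, d ≠ μ • α) :
    ∃ t : ℝ, 0 < t ∧ (∀ i, 0 ≤ α i + t * d i) ∧ (∃ j, α j + t * d j = 0) ∧
      (fun i => α i + t * d i) ≠ 0 := by
  classical
  obtain ⟨i0, hi0⟩ := hneg
  set S : Finset (Fin s) := univ.filter (fun i => d i < 0) with hS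
  have hSne : S.Nonempty := ⟨i0, by simp [hS, hi0]⟩
  set t : ℝ := S.inf' hSne (fun i => α i / (-d i)) with ht
  have htpos : 0 < t := by
    rw [ht, Finset.lt_inf'_iff]
    intro i hi
    have hdi : d i < 0 := by simpa [hS] using hi
    exact div_pos (hα i) (by linarith)
  have hkey : ∀ i, d i < 0 → t * (-d i) ≤ α i := by
    intro i hdi
    have hle : t ≤ α i / (-d i) := Finset.inf'_le _ (by simp [hS, hdi])
    have : 0 < -d i := by linarith
    calc t * (-d i) ≤ (α i / (-d i)) * (-d i) := by nlinarith
    _ = α i := div_mul_cancel₀ _ (by linarith)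
  refine ⟨t, htpos, ?_, ?_, ?_⟩
  · intro i
    by_cases hdi : d i < 0
    · have := hkey i hdi; nlinarith
    · push_neg at hdi
      have := hα i
      nlinarith
  · obtain ⟨j, hjS, hj⟩ := Finset.exists_mem_eq_inf' hSne (fun i => α i / (-d i))
    refine ⟨j, ?_⟩
    have hdj : d j < 0 := by simpa [hS] using hjS
    have hdj' : -d j ≠ 0 := by linarith
    rw [ht, hj]
    field_simp
    rw [div_self (ne_of_lt hdj)]; ring
  · intro h
    have h' : ∀ i, α i + t * d i = 0 := fun i => congrFun h i
    apply hnp (-(1/t))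
    funext i
    have := h' i
    have : d i = -(1/t) * α i := by
      field_simp
      linarith
    simpa using this

/-- If `d` is nonnegative and not a multiple of `α`, shift `d` down by a multiple of `α`
to reach the boundary of the positive orthant. -/
lemma construct_aux2 {s : ℕ} (hs : 0 < s) (α d : Fin s → ℝ) (hα : ∀ i, 0 < α i)
    (hpos : ∀ i, 0 ≤ d i) (hnp : ∀ μ : ℝ, d ≠ μ • α) :
    ∃ lam : ℝ, 0 ≤ lam ∧ (∀ i, 0 ≤ d i - lam * α i) ∧ (∃ j, d j - lam * α j = 0) ∧
      (fun i => d i - lam * α i) ≠ 0 := by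
  have hne : (univ : Finset (Fin s)).Nonempty :=
    univ_nonempty_iff.mpr (Fin.pos_iff_nonempty.mp hs)
  set lam : ℝ := univ.inf' hne (fun i => d i / α i) with hlam
  have hlam0 : 0 ≤ lam := by
    rw [hlam, Finset.le_inf'_iff]
    intro i _
    exact div_nonneg (hpos i) (hα i).le
  have hkey : ∀ i, lam * α i ≤ d i := by
    intro i
    have hle : lam ≤ d i / α i := Finset.inf'_le _ (mem_univ i)
    have := hα i
    calc lam * α i ≤ (d i / α i) * α i := by nlinarith
    _ = d i := by field_simp
  refine ⟨lam, hlam0, ?_, ?_, ?_⟩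
  · intro i; have := hkey i; linarith
  · obtain ⟨j, _, hj⟩ := Finset.exists_mem_eq_inf' hne (fun i => d i / α i)
    refine ⟨j, ?_⟩
    have : α j ≠ 0 := (hα j).ne'
    rw [hlam, hj]
    field_simp
    ring
  · intro h
    have h' : ∀ i, d i - lam * α i = 0 := fun i => congrFun h i
    apply hnp lam
    funext i
    have := h' i
    simp only [Pi.smul_apply, smul_eq_mul]
    linarith

/-- let `f(β) = ⟨c,β⟩ + max_k ⟨v k, β⟩` on `ℝ^s`, with `1 ≤ p ≤ s - 1`
linear pieces.  If `f(α) ≤ 0` at some strictly positive `α`, then `f ≤ 0` at some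
nonzero point of the boundary of the positive orthant. -/
theorem stmt_17 (s p : ℕ) (hs : 2 ≤ s) (hp : 1 ≤ p) (hps : p ≤ s - 1)
    (c : Fin s → ℝ) (v : Fin p → Fin s → ℝ)
    (f : (Fin s → ℝ) → ℝ)
    (hf : ∀ β, f β = (∑ i, c i * β i) +
      (Finset.univ.sup' (univ_nonempty_iff.mpr (Fin.pos_iff_nonempty.mp hp))
        fun k => ∑ i, v k i * β i))
    (α : Fin s → ℝ) (hαpos : ∀ i, 0 < α i) (hfα : f α ≤ 0) :
    ∃ β : Fin s → ℝ, (∀ i, 0 ≤ β i) ∧ (∃ j, β j = 0) ∧ β ≠ 0 ∧ f β ≤ 0 := by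
  classical
  have hs0 : 0 < s := by omega
  set W : Matrix (Fin p) (Fin s) ℝ := fun k i => c i + v k i with hWdef
  have hsplit : ∀ (k : Fin p) (β : Fin s → ℝ),
      ∑ i, W k i * β i = (∑ i, c i * β i) + ∑ i, v k i * β i := by
    intro k β
    rw [← Finset.sum_add_distrib]
    apply Finset.sum_congr rfl
    intro i _
    simp [hWdef]; ring
  -- from hfα : each piece is ≤ 0 at α
  have hWα : ∀ k, ∑ i, W k i * α i ≤ 0 := by
    intro k
    rw [hf] at hfα
    have h1 : (∑ i, v k i * α i) ≤ Finset.univ.sup'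
        (univ_nonempty_iff.mpr (Fin.pos_iff_nonempty.mp hp))
        (fun k => ∑ i, v k i * α i) :=
      Finset.le_sup' (fun k => ∑ i, v k i * α i) (mem_univ k)
    rw [hsplit]
    linarith
  -- conversely, if all pieces are ≤ 0 at β then f β ≤ 0
  have final : ∀ β : Fin s → ℝ, (∀ k, ∑ i, W k i * β i ≤ 0) → f β ≤ 0 := by
    intro β h
    rw [hf]
    have : (Finset.univ.sup' (univ_nonempty_iff.mpr (Fin.pos_iff_nonempty.mp hp))
        fun k => ∑ i, v k i * β i) ≤ - ∑ i, c i * β i := by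
      apply Finset.sup'_le
      intro k _
      have := h k
      rw [hsplit] at this
      linarith
    linarith
  -- the linear map of pieces
  set T : (Fin s → ℝ) →ₗ[ℝ] (Fin p → ℝ) := Matrix.mulVecLin W with hT
  have hTapp : ∀ (β : Fin s → ℝ) (k : Fin p), T β k = ∑ i, W k i * β i := by
    intro β k
    simp [hT, Matrix.mulVecLin, Matrix.mulVec, dotProduct]
  have hranks : Module.finrank ℝ (LinearMap.range T) + Module.finrank ℝ (LinearMap.ker T)
      = s := by
    have := LinearMap.finrank_range_add_finrank_ker T
    simpa using this
  have hrange_le : Module.finrank ℝ (LinearMap.range T) ≤ p := by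
    have h1 : Module.finrank ℝ (LinearMap.range T) ≤ Module.finrank ℝ (Fin p → ℝ) :=
      Submodule.finrank_le _
    simpa using h1
  have hker1 : 1 ≤ Module.finrank ℝ (LinearMap.ker T) := by omega
  have hαne : α ≠ 0 := by
    intro h
    exact absurd (congrFun h ⟨0, hs0⟩) (hαpos ⟨0, hs0⟩).ne'
  by_cases hcase : LinearMap.ker T ≤ Submodule.span ℝ {α}
  · -- ker T = span α : so T α = 0 and T is surjective, p = s - 1
    have hspan1 : Module.finrank ℝ (Submodule.span ℝ ({α} : Set (Fin s → ℝ))) = 1 :=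
      finrank_span_singleton hαne
    have heq : LinearMap.ker T = Submodule.span ℝ {α} :=
      Submodule.eq_of_le_of_finrank_le hcase (by omega)
    have hαker : α ∈ LinearMap.ker T := by
      rw [heq]; exact Submodule.mem_span_singleton_self α
    have hTα : ∀ k, ∑ i, W k i * α i = 0 := by
      intro k
      have := LinearMap.mem_ker.mp hαker
      have := congrFun this k
      rw [← hTapp α k]
      exact this
    have hkerrank : Module.finrank ℝ (LinearMap.ker T) = 1 := by rw [heq]; exact hspan1
    have hrangetop : LinearMap.range T = ⊤ := by
      apply Submodule.eq_top_of_finrank_eq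
      have : Module.finrank ℝ (Fin p → ℝ) = p := by simp
      omega
    -- find d with T d = -1 everywhere
    obtain ⟨d, hd⟩ : ∃ d, T d = fun _ => (-1 : ℝ) := by
      have : (fun _ => (-1 : ℝ)) ∈ LinearMap.range T := by rw [hrangetop]; trivial
      exact this
    have hTd : ∀ k, ∑ i, W k i * d i = -1 := by
      intro k
      rw [← hTapp d k, hd]
    have hnp : ∀ μ : ℝ, d ≠ μ • α := by
      intro μ h
      have : T d = μ • T α := by rw [h, map_smul]
      have h2 := congrFun this ⟨0, hp⟩
      rw [hd] at h2
      have h3 := LinearMap.mem_ker.mp hαker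
      rw [h3] at h2
      simp at h2
    by_cases hneg : ∃ i, d i < 0
    · obtain ⟨t, htpos, hnonneg, hzero, hne⟩ := construct_aux α d hαpos hneg hnp
      refine ⟨fun i => α i + t * d i, hnonneg, hzero, hne, ?_⟩
      apply final
      intro k
      have hsum : ∑ i, W k i * (α i + t * d i)
          = (∑ i, W k i * α i) + t * ∑ i, W k i * d i := by
        rw [Finset.mul_sum, ← Finset.sum_add_distrib]
        apply Finset.sum_congr rfl
        intro i _; ring
      rw [hsum, hTα k, hTd k]
      linarith
    · push_neg at hneg
      obtain ⟨lam, hlam0, hnonneg, hzero, hne⟩ := construct_aux2 hs0 α d hαpos hneg hnp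
      refine ⟨fun i => d i - lam * α i, hnonneg, hzero, hne, ?_⟩
      apply final
      intro k
      have hsum : ∑ i, W k i * (d i - lam * α i)
          = (∑ i, W k i * d i) - lam * ∑ i, W k i * α i := by
        rw [Finset.mul_sum, ← Finset.sum_sub_distrib]
        apply Finset.sum_congr rfl
        intro i _; ring
      rw [hsum, hTα k, hTd k]
      linarith
  · -- there is d in ker T not in span α
    rw [SetLike.not_le_iff_exists] at hcase
    obtain ⟨d0, hd0ker, hd0span⟩ := hcase
    have hnp0 : ∀ μ : ℝ, d0 ≠ μ • α := by
      intro μ h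
      exact hd0span (by rw [h]; exact Submodule.smul_mem _ μ (Submodule.mem_span_singleton_self α))
    have hd0ne : d0 ≠ 0 := by
      intro h
      exact hnp0 0 (by rw [h]; simp)
    -- pick a direction with a negative coordinate
    obtain ⟨d, hdker, hdnp, hdneg⟩ :
        ∃ d, d ∈ LinearMap.ker T ∧ (∀ μ : ℝ, d ≠ μ • α) ∧ ∃ i, d i < 0 := by
      by_cases hneg : ∃ i, d0 i < 0
      · exact ⟨d0, hd0ker, hnp0, hneg⟩
      · push_neg at hneg
        refine ⟨-d0, Submodule.neg_mem _ hd0ker, ?_, ?_⟩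
        · intro μ h
          apply hnp0 (-μ)
          funext i
          have := congrFun h i
          simp only [Pi.neg_apply, Pi.smul_apply, smul_eq_mul] at this ⊢
          linarith
        · have : ∃ i, d0 i ≠ 0 := by
            by_contra hc
            push_neg at hc
            exact hd0ne (funext hc)
          obtain ⟨i, hi⟩ := this
          exact ⟨i, by simp; cases (hneg i).lt_or_eq with
            | inl h => exact h
            | inr h => exact absurd h.symm hi⟩
    have hTd : ∀ k, ∑ i, W k i * d i = 0 := by
      intro k
      have := LinearMap.mem_ker.mp hdker
      have := congrFun this k
      rw [← hTapp d k]
      exact this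
    obtain ⟨t, htpos, hnonneg, hzero, hne⟩ := construct_aux α d hαpos hdneg hdnp
    refine ⟨fun i => α i + t * d i, hnonneg, hzero, hne, ?_⟩
    apply final
    intro k
    have hsum : ∑ i, W k i * (α i + t * d i)
        = (∑ i, W k i * α i) + t * ∑ i, W k i * d i := by
      rw [Finset.mul_sum, ← Finset.sum_add_distrib]
      apply Finset.sum_congr rfl
      intro i _; ring
    rw [hsum, hTd k]
    have := hWα k
    linarith
end
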